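/- arXiv:2503.02260 — 3 statements merged into one kernel-verified Lean document; each statement's English description precedes it below -/
import Mathlib

section
/- In a lextensive category, if u : A → X and v : B → X are powerful morphisms, then the induced morphism [u,v] : A + B → X is powerful. -/
open CategoryTheory Limits

universe w₂ w₁ t₂ t₁ s₂ s₁ r₂ r₁

section AuxAdjunctions

/-- The uncurried binary coproduct functor. -/
@[simps]
noncomputable abbrev coprodF (D : Type w₁) [Category.{w₂} D] [HasBinaryCoproducts D] :
    D × D ⥤ D where
  obj P := P.1 ⨿ P.2
  map f := coprod.map f.1 f.2

/-- The uncurried binary product functor. -/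
@[simps]
noncomputable abbrev prodF (D : Type w₁) [Category.{w₂} D] [HasBinaryProducts D] :
    D × D ⥤ D where
  obj P := P.1 ⨯ P.2
  map f := prod.map f.1 f.2

/-- The binary coproduct functor is left adjoint to the diagonal. -/
noncomputable def coprodDiagAdj (D : Type w₁) [Category.{w₂} D] [HasBinaryCoproducts D] :
    coprodF D ⊣ Functor.diag D :=
  Adjunction.mkOfHomEquiv
  { homEquiv := fun P Y =>
    { toFun := fun f => (coprod.inl ≫ f, coprod.inr ≫ f)
      invFun := fun g => coprod.desc g.1 g.2
      left_inv := fun f => by apply coprod.hom_ext <;> simp [coprod.inl_desc, coprod.inr_desc]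
      right_inv := fun g => by simp [coprod.inl_desc, coprod.inr_desc] }
    homEquiv_naturality_left_symm := by
      intros; dsimp; ext <;> simp
    homEquiv_naturality_right := by
      intros; dsimp; ext <;> simp }

/-- The diagonal is left adjoint to the binary product functor. -/
noncomputable def diagProdAdj (D : Type w₁) [Category.{w₂} D] [HasBinaryProducts D] :
    Functor.diag D ⊣ prodF D :=
  Adjunction.mkOfHomEquiv
  { homEquiv := fun Y P =>
    { toFun := fun f => prod.lift f.1 f.2
      invFun := fun g => (g ≫ prod.fst, g ≫ prod.snd)
      left_inv := fun f => by simp [prod.lift_fst, prod.lift_snd]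
      right_inv := fun g => by apply Limits.prod.hom_ext <;> simp [prod.lift_fst, prod.lift_snd] }
    homEquiv_naturality_left_symm := by
      intros; dsimp; ext <;> simp
    homEquiv_naturality_right := by
      intros; dsimp; ext <;> simp }

/-- The product of two adjunctions. -/
noncomputable def prodAdj {C₁ : Type t₁} [Category.{t₂} C₁] {C₂ : Type s₁} [Category.{s₂} C₂]
    {D₁ : Type r₁} [Category.{r₂} D₁] {D₂ : Type w₁} [Category.{w₂} D₂]
    {F₁ : C₁ ⥤ D₁} {G₁ : D₁ ⥤ C₁} {F₂ : C₂ ⥤ D₂} {G₂ : D₂ ⥤ C₂}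
    (a₁ : F₁ ⊣ G₁) (a₂ : F₂ ⊣ G₂) : F₁.prod F₂ ⊣ G₁.prod G₂ :=
  Adjunction.mkOfHomEquiv
  { homEquiv := fun P Q =>
    { toFun := fun f => (a₁.homEquiv _ _ f.1, a₂.homEquiv _ _ f.2)
      invFun := fun g => ((a₁.homEquiv _ _).symm g.1, (a₂.homEquiv _ _).symm g.2)
      left_inv := fun f => by simp
      right_inv := fun g => by simp }
    homEquiv_naturality_left_symm := by
      intros; dsimp
      apply Prod.ext
      · exact Adjunction.homEquiv_naturality_left_symm _ _ _
      · exact Adjunction.homEquiv_naturality_left_symm _ _ _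
    homEquiv_naturality_right := by
      intros; dsimp
      apply Prod.ext
      · exact Adjunction.homEquiv_naturality_right _ _ _
      · exact Adjunction.homEquiv_naturality_right _ _ _ }

end AuxAdjunctions

/-- In a lextensive category, if `u : A ⟶ X` and `v : B ⟶ X` are powerful morphisms
(pullback along them is a left adjoint), then `[u,v] : A ⨿ B ⟶ X` is powerful. -/
theorem coprod_desc_powerful {C : Type u} [Category.{v} C]
    [HasFiniteLimits C] [HasFiniteCoproducts C] [FinitaryExtensive C]
    {A B X : C} (u : A ⟶ X) (v : B ⟶ X)
    (hu : (Over.pullback u).IsLeftAdjoint) (hv : (Over.pullback v).IsLeftAdjoint) :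
    (Over.pullback (coprod.desc u v)).IsLeftAdjoint := by
  haveI : HasPullbacks C := inferInstance
  -- the van Kampen property of the coproduct cofan `A ⟶ A ⨿ B ⟵ B`
  have vkc : IsVanKampenColimit (BinaryCofan.mk (coprod.inl : A ⟶ A ⨿ B) coprod.inr) :=
    FinitaryExtensive.vanKampen _ (coprodIsCoprod A B)
  -- every object of `Over (A ⨿ B)` is the coproduct of its pullbacks along the inclusions
  have hcf : ∀ g : Over (A ⨿ B), Nonempty (IsColimit (BinaryCofan.mk
      (pullback.fst g.hom (coprod.inl : A ⟶ A ⨿ B))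
      (pullback.fst g.hom (coprod.inr : B ⟶ A ⨿ B)))) := by
    intro g
    have w : mapPair (pullback.snd g.hom coprod.inl) (pullback.snd g.hom coprod.inr) ≫
        (BinaryCofan.mk (coprod.inl : A ⟶ A ⨿ B) coprod.inr).ι =
        (BinaryCofan.mk (pullback.fst g.hom (coprod.inl : A ⟶ A ⨿ B))
          (pullback.fst g.hom (coprod.inr : B ⟶ A ⨿ B))).ι ≫
          (Functor.const _).map g.hom := by
      apply NatTrans.ext; funext j
      rcases j with ⟨⟨⟩⟩ <;> exact pullback.condition.symm
    refine (vkc _ _ g.hom w (mapPair_equifibered _)).mpr ?_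
    rintro ⟨⟨⟩⟩
    · exact IsPullback.of_hasPullback g.hom coprod.inl
    · exact IsPullback.of_hasPullback g.hom coprod.inr
  -- the functor sending an object over `A ⨿ B` to the pair of its pullbacks
  let F : Over (A ⨿ B) ⥤ Over A × Over B :=
    Functor.diag _ ⋙ (Over.pullback (coprod.inl : A ⟶ A ⨿ B)).prod
      (Over.pullback (coprod.inr : B ⟶ A ⨿ B))
  haveI : F.Faithful := by
    constructor
    intro g h φ ψ e
    have e1 : pullback.fst g.hom (coprod.inl : A ⟶ A ⨿ B) ≫ φ.left =
        pullback.fst g.hom (coprod.inl : A ⟶ A ⨿ B) ≫ ψ.left := by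
      have := congrArg (fun t => t.1.left ≫ pullback.fst h.hom (coprod.inl : A ⟶ A ⨿ B)) e
      dsimp [F] at this
      simpa [pullback.lift_fst] using this
    have e2 : pullback.fst g.hom (coprod.inr : B ⟶ A ⨿ B) ≫ φ.left =
        pullback.fst g.hom (coprod.inr : B ⟶ A ⨿ B) ≫ ψ.left := by
      have := congrArg (fun t => t.2.left ≫ pullback.fst h.hom (coprod.inr : B ⟶ A ⨿ B)) e
      dsimp [F] at this
      simpa [pullback.lift_fst] using this
    apply Over.OverMorphism.ext
    refine (hcf g).some.hom_ext ?_
    rintro ⟨⟨⟩⟩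
    · exact e1
    · exact e2
  haveI : F.Full := by
    constructor
    rintro g h ⟨α, β⟩
    have wα : α.left ≫ pullback.snd h.hom (coprod.inl : A ⟶ A ⨿ B) =
        pullback.snd g.hom (coprod.inl : A ⟶ A ⨿ B) := Over.w α
    have wβ : β.left ≫ pullback.snd h.hom (coprod.inr : B ⟶ A ⨿ B) =
        pullback.snd g.hom (coprod.inr : B ⟶ A ⨿ B) := Over.w β
    let l : g.left ⟶ h.left := (hcf g).some.desc (BinaryCofan.mk
      (α.left ≫ pullback.fst h.hom coprod.inl) (β.left ≫ pullback.fst h.hom coprod.inr))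
    have hl₁ : pullback.fst g.hom (coprod.inl : A ⟶ A ⨿ B) ≫ l =
        α.left ≫ pullback.fst h.hom coprod.inl :=
      (hcf g).some.fac _ ⟨WalkingPair.left⟩
    have hl₂ : pullback.fst g.hom (coprod.inr : B ⟶ A ⨿ B) ≫ l =
        β.left ≫ pullback.fst h.hom coprod.inr :=
      (hcf g).some.fac _ ⟨WalkingPair.right⟩
    have hw : l ≫ h.hom = g.hom := by
      refine (hcf g).some.hom_ext ?_
      rintro ⟨⟨⟩⟩
      · show pullback.fst g.hom (coprod.inl : A ⟶ A ⨿ B) ≫ l ≫ h.hom =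
          pullback.fst g.hom (coprod.inl : A ⟶ A ⨿ B) ≫ g.hom
        have hg : pullback.fst g.hom (coprod.inl : A ⟶ A ⨿ B) ≫ g.hom =
            pullback.snd g.hom (coprod.inl : A ⟶ A ⨿ B) ≫ coprod.inl := pullback.condition
        rw [hg, ← Category.assoc, hl₁, Category.assoc, pullback.condition, ← Category.assoc, wα]
      · show pullback.fst g.hom (coprod.inr : B ⟶ A ⨿ B) ≫ l ≫ h.hom =
          pullback.fst g.hom (coprod.inr : B ⟶ A ⨿ B) ≫ g.hom
        have hg : pullback.fst g.hom (coprod.inr : B ⟶ A ⨿ B) ≫ g.hom =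
            pullback.snd g.hom (coprod.inr : B ⟶ A ⨿ B) ≫ coprod.inr := pullback.condition
        rw [hg, ← Category.assoc, hl₂, Category.assoc, pullback.condition, ← Category.assoc, wβ]
    refine ⟨Over.homMk l hw, ?_⟩
    apply Prod.ext
    · apply Over.OverMorphism.ext
      apply pullback.hom_ext
      · dsimp [F]; simpa [pullback.lift_fst] using hl₁
      · dsimp [F]; simpa [pullback.lift_snd] using wα.symm
    · apply Over.OverMorphism.ext
      apply pullback.hom_ext
      · dsimp [F]; simpa [pullback.lift_fst] using hl₂
      · dsimp [F]; simpa [pullback.lift_snd] using wβ.symm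
  -- the left adjoint of `F`
  let G : Over A × Over B ⥤ Over (A ⨿ B) :=
    ((Over.map (coprod.inl : A ⟶ A ⨿ B)).prod (Over.map (coprod.inr : B ⟶ A ⨿ B))) ⋙
      coprodF (Over (A ⨿ B))
  let adjG : G ⊣ F :=
    (prodAdj (Over.mapPullbackAdj (coprod.inl : A ⟶ A ⨿ B))
      (Over.mapPullbackAdj (coprod.inr : B ⟶ A ⨿ B))).comp (coprodDiagAdj _)
  haveI : IsIso adjG.counit := inferInstance
  -- the composite left adjoint
  let L0 : Over X ⥤ Over A × Over B :=
    Functor.diag _ ⋙ (Over.pullback u).prod (Over.pullback v)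
  haveI : (L0 ⋙ G).IsLeftAdjoint :=
    ⟨_, ⟨((diagProdAdj (Over X)).comp (prodAdj (Adjunction.ofIsLeftAdjoint (Over.pullback u))
      (Adjunction.ofIsLeftAdjoint (Over.pullback v)))).comp adjG⟩⟩
  -- identification of the composite with pullback along `coprod.desc u v`
  let e₁ : Over.pullback (coprod.desc u v) ⋙ Over.pullback (coprod.inl : A ⟶ A ⨿ B) ≅
      Over.pullback u :=
    (Over.pullbackComp coprod.inl (coprod.desc u v)).symm ≪≫
      eqToIso (by simp only [coprod.inl_desc])
  let e₂ : Over.pullback (coprod.desc u v) ⋙ Over.pullback (coprod.inr : B ⟶ A ⨿ B) ≅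
      Over.pullback v :=
    (Over.pullbackComp coprod.inr (coprod.desc u v)).symm ≪≫
      eqToIso (by simp only [coprod.inr_desc])
  let isoA : Over.pullback (coprod.desc u v) ⋙ F ≅ L0 :=
    Functor.isoWhiskerLeft (Functor.diag (Over X)) (NatIso.prod e₁ e₂)
  have final : L0 ⋙ G ≅ Over.pullback (coprod.desc u v) :=
    (Functor.isoWhiskerRight isoA G).symm ≪≫
      Functor.isoWhiskerLeft (Over.pullback (coprod.desc u v)) (asIso adjG.counit) ≪≫
      (Over.pullback (coprod.desc u v)).rightUnitor
  exact Functor.isLeftAdjoint_of_iso final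
end

section
/- If a bicategory C has binary bicategorical products and R is a protocalibration of C, then R is closed under binary products of morphisms: if f : X → Y and f' : X' → Y' are in R, then f × f' : X × X' → Y × Y' is in R. -/
open CategoryTheory CategoryTheory.Bicategory

universe w v u v₁ v₂ u₁ u₂

section FunctorDefs

variable {E : Type u₁} [Category.{v₁} E] {D : Type u₂} [Category.{v₂} D]

/-- `κ` is cartesian for a functor `p`: the square of hom-sets is a pullback. -/
def IsCartesianMor (p : E ⥤ D) {z x : E} (κ : z ⟶ x) : Prop :=
  ∀ {k : E} (g : k ⟶ x) (h : p.obj k ⟶ p.obj z),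
    h ≫ p.map κ = p.map g → ∃! l : k ⟶ z, l ≫ κ = g ∧ p.map l = h

/-- A functor is a groupoid fibration of categories. -/
def IsGroupoidFibrationFunctor (p : E ⥤ D) : Prop :=
  (∀ {z x : E} (κ : z ⟶ x), IsCartesianMor p κ) ∧
  (∀ (x : E) {b : D} (φ : b ⟶ p.obj x),
    ∃ (z : E) (κ : z ⟶ x) (θ : b ≅ p.obj z), θ.hom ≫ p.map κ = φ)

/-- A functor is a groupoid opfibration when its opposite is a groupoid fibration. -/
def IsGroupoidOpfibrationFunctor (p : E ⥤ D) : Prop :=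
  IsGroupoidFibrationFunctor p.op

end FunctorDefs

variable {B : Type u} [Bicategory.{w, v} B]

/-- A 1-cell `p : a ⟶ b` of a bicategory is a groupoid opfibration when, for every
object `U`, the postcomposition functor `(U ⟶ a) ⥤ (U ⟶ b)` is a groupoid
opfibration of categories. -/
def IsGroupoidOpfibration1Cell {a b : B} (p : a ⟶ b) : Prop :=
  ∀ U : B, IsGroupoidOpfibrationFunctor ((Bicategory.postcomposing U a b).obj p)

/-- `f : a ⟶ b` is an equivalence 1-cell. -/
def IsEquiv1Cell {a b : B} (f : a ⟶ b) : Prop :=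
  ∃ g : b ⟶ a, Nonempty (𝟙 a ≅ f ≫ g) ∧ Nonempty (g ≫ f ≅ 𝟙 b)

/-- The universal property of a bicategorical pullback of `f : u ⟶ w` and `g : v ⟶ w`
with projections `gbar : p ⟶ u`, `fbar : p ⟶ v` and invertible 2-cell
`φ : gbar ≫ f ≅ fbar ≫ g`. -/
structure IsBipullback {u v w p : B} (f : u ⟶ w) (g : v ⟶ w)
    (gbar : p ⟶ u) (fbar : p ⟶ v) (φ : gbar ≫ f ≅ fbar ≫ g) : Prop where
  lift : ∀ {t : B} (a : t ⟶ u) (b : t ⟶ v) (ψ : a ≫ f ≅ b ≫ g),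
    ∃ (h : t ⟶ p) (ia : h ≫ gbar ≅ a) (ib : h ≫ fbar ≅ b),
      (ia.inv ▷ f) ≫ (α_ h gbar f).hom ≫ (h ◁ φ.hom) ≫ (α_ h fbar g).inv ≫
        (ib.hom ▷ g) = ψ.hom
  faithful₂ : ∀ {t : B} (h h' : t ⟶ p) (γ γ' : h ⟶ h'),
    γ ▷ gbar = γ' ▷ gbar → γ ▷ fbar = γ' ▷ fbar → γ = γ'
  full₂ : ∀ {t : B} (h h' : t ⟶ p) (β : h ≫ gbar ⟶ h' ≫ gbar)
    (δ : h ≫ fbar ⟶ h' ≫ fbar),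
    (β ▷ f) ≫ (α_ h' gbar f).hom ≫ (h' ◁ φ.hom) =
      (α_ h gbar f).hom ≫ (h ◁ φ.hom) ≫ (α_ h fbar g).inv ≫ (δ ▷ g) ≫
        (α_ h' fbar g).hom →
    ∃ γ : h ⟶ h', γ ▷ gbar = β ∧ γ ▷ fbar = δ

/-- A protocalibration of a bicategory: contains equivalences, closed under
isomorphism of 1-cells and composition, bipullbacks of members along arbitrary
morphisms exist with the corresponding projection a member, and all members are
groupoid opfibrations. -/
structure Protocalibration (R : ∀ ⦃a b : B⦄, (a ⟶ b) → Prop) : Prop where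
  equiv_mem : ∀ {a b : B} (f : a ⟶ b), IsEquiv1Cell f → R f
  iso_closed : ∀ {a b : B} (f g : a ⟶ b), (f ≅ g) → R f → R g
  comp_mem : ∀ {a b c : B} (f : a ⟶ b) (g : b ⟶ c), R f → R g → R (f ≫ g)
  bipullback : ∀ {u v w : B} (f : u ⟶ w) (g : v ⟶ w), R f →
    ∃ (p : B) (gbar : p ⟶ u) (fbar : p ⟶ v) (φ : gbar ≫ f ≅ fbar ≫ g),
      IsBipullback f g gbar fbar φ ∧ R fbar
  gpd_opfib : ∀ {a b : B} (f : a ⟶ b), R f → IsGroupoidOpfibration1Cell f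

/-- A binary bicategorical product of `X` and `X'`: an object `P` with projections
such that for every `W` the induced functor `(W ⟶ P) ⥤ (W ⟶ X) × (W ⟶ X')` is an
equivalence. -/
structure BinaryBiproduct (X X' : B) where
  P : B
  p : P ⟶ X
  p' : P ⟶ X'
  ue : ∀ W : B, (((Bicategory.postcomposing W P X).obj p).prod'
      ((Bicategory.postcomposing W P X').obj p')).IsEquivalence

/-- From a bipullback, two isomorphisms of projections satisfying the compatibility
condition induce an isomorphism of the induced morphisms. -/
lemma IsBipullback.iso_of_proj {u v w p : B} {f : u ⟶ w} {g : v ⟶ w}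
    {gbar : p ⟶ u} {fbar : p ⟶ v} {φ : gbar ≫ f ≅ fbar ≫ g}
    (H : IsBipullback f g gbar fbar φ) {t : B} {h h' : t ⟶ p}
    (β : h ≫ gbar ≅ h' ≫ gbar) (δ : h ≫ fbar ≅ h' ≫ fbar)
    (compat : (β.hom ▷ f) ≫ (α_ h' gbar f).hom ≫ (h' ◁ φ.hom) =
      (α_ h gbar f).hom ≫ (h ◁ φ.hom) ≫ (α_ h fbar g).inv ≫ (δ.hom ▷ g) ≫
        (α_ h' fbar g).hom) :
    ∃ γ : h ≅ h', γ.hom ▷ gbar = β.hom ∧ γ.hom ▷ fbar = δ.hom := by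
  obtain ⟨γ₁, hβ₁, hδ₁⟩ := H.full₂ h h' β.hom δ.hom compat
  have e1 : h ◁ φ.hom =
      (α_ h gbar f).inv ≫ ((β.hom ▷ f) ≫ (α_ h' gbar f).hom ≫ (h' ◁ φ.hom)) ≫
        (α_ h' fbar g).inv ≫ (δ.inv ▷ g) ≫ (α_ h fbar g).hom := by
    rw [compat]
    simp only [Category.assoc, Iso.inv_hom_id_assoc, Iso.hom_inv_id_assoc,
      hom_inv_whiskerRight_assoc, Iso.hom_inv_id, Iso.inv_hom_id, Category.comp_id]
  have compat' : (β.inv ▷ f) ≫ (α_ h gbar f).hom ≫ (h ◁ φ.hom) =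
      (α_ h' gbar f).hom ≫ (h' ◁ φ.hom) ≫ (α_ h' fbar g).inv ≫ (δ.inv ▷ g) ≫
        (α_ h fbar g).hom := by
    rw [e1]
    simp only [Category.assoc, Iso.hom_inv_id_assoc, inv_hom_whiskerRight_assoc]
  obtain ⟨γ₂, hβ₂, hδ₂⟩ := H.full₂ h' h β.inv δ.inv compat'
  refine ⟨⟨γ₁, γ₂, ?_, ?_⟩, hβ₁, hδ₁⟩
  · exact H.faithful₂ h h (γ₁ ≫ γ₂) (𝟙 h)
      (by rw [comp_whiskerRight, hβ₁, hβ₂, Iso.hom_inv_id, id_whiskerRight])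
      (by rw [comp_whiskerRight, hδ₁, hδ₂, Iso.hom_inv_id, id_whiskerRight])
  · exact H.faithful₂ h' h' (γ₂ ≫ γ₁) (𝟙 h')
      (by rw [comp_whiskerRight, hβ₂, hβ₁, Iso.inv_hom_id, id_whiskerRight])
      (by rw [comp_whiskerRight, hδ₂, hδ₁, Iso.inv_hom_id, id_whiskerRight])

/-- If a bicategory has binary bicategorical products and `R` is a protocalibration,
then `R` is closed under binary products of morphisms: given `f : X ⟶ Y` and
`f' : X' ⟶ Y'` in `R`, any product morphism `m : X × X' ⟶ Y × Y'` (one commuting with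
the projections up to isomorphism) is in `R`. -/
theorem protocalibration_closed_under_binary_products
    (R : ∀ ⦃a b : B⦄, (a ⟶ b) → Prop) (hR : Protocalibration R)
    {X X' Y Y' : B} (bX : BinaryBiproduct X X') (bY : BinaryBiproduct Y Y')
    (f : X ⟶ Y) (f' : X' ⟶ Y') (hf : R f) (hf' : R f')
    (m : bX.P ⟶ bY.P)
    (i₁ : m ≫ bY.p ≅ bX.p ≫ f) (i₂ : m ≫ bY.p' ≅ bX.p' ≫ f') :
    R m := by
  obtain ⟨Q, gbar, fbar, φ, HQ, hfbar⟩ := hR.bipullback f bY.p hf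
  obtain ⟨n, ian, ibn, En⟩ := HQ.lift bX.p m i₁.symm
  obtain ⟨Q₂, gbar₂, fbar₂, φ₂, HQ₂, hfbar₂⟩ := hR.bipullback f' (fbar ≫ bY.p') hf'
  obtain ⟨e, iae, ibe, Ee⟩ := HQ₂.lift bX.p' n
    (i₂.symm ≪≫ whiskerRightIso ibn.symm bY.p' ≪≫ α_ n fbar bY.p')
  -- rearranged lift equations
  have En2 : (ian.inv ▷ f) ≫ (α_ n gbar f).hom ≫ (n ◁ φ.hom) ≫
      (α_ n fbar bY.p).inv ≫ (ibn.hom ▷ bY.p) = i₁.inv := by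
    simpa only [Iso.symm_hom] using En
  have En4 : ian.hom ▷ f = (α_ n gbar f).hom ≫ (n ◁ φ.hom) ≫
      (α_ n fbar bY.p).inv ≫ (ibn.hom ▷ bY.p) ≫ i₁.hom := by
    conv_lhs => rw [← Category.comp_id (ian.hom ▷ f), ← i₁.inv_hom_id, ← En2]
    simp only [Category.assoc, hom_inv_whiskerRight_assoc]
  have Ee2 : (iae.inv ▷ f') ≫ (α_ e gbar₂ f').hom ≫ (e ◁ φ₂.hom) ≫
      (α_ e fbar₂ (fbar ≫ bY.p')).inv ≫ (ibe.hom ▷ (fbar ≫ bY.p')) =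
      i₂.inv ≫ (ibn.inv ▷ bY.p') ≫ (α_ n fbar bY.p').hom := by
    simpa only [Iso.trans_hom, Iso.symm_hom, whiskerRightIso_hom] using Ee
  have Ee4 : iae.hom ▷ f' = (α_ e gbar₂ f').hom ≫ (e ◁ φ₂.hom) ≫
      (α_ e fbar₂ (fbar ≫ bY.p')).inv ≫ (ibe.hom ▷ (fbar ≫ bY.p')) ≫
      (α_ n fbar bY.p').inv ≫ (ibn.hom ▷ bY.p') ≫ i₂.hom := by
    conv_lhs => rw [← Category.comp_id (iae.hom ▷ f')]
    rw [show 𝟙 (bX.p' ≫ f') = (i₂.inv ≫ (ibn.inv ▷ bY.p') ≫ (α_ n fbar bY.p').hom) ≫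
      ((α_ n fbar bY.p').inv ≫ (ibn.hom ▷ bY.p') ≫ i₂.hom) by
        simp only [Category.assoc, Iso.hom_inv_id_assoc, inv_hom_whiskerRight_assoc,
          Iso.inv_hom_id], ← Ee2]
    simp only [Category.assoc, hom_inv_whiskerRight_assoc]
  -- e' from the biproduct universal property of bX at Q₂
  obtain ⟨e', ⟨j, j'⟩⟩ : ∃ e' : Q₂ ⟶ bX.P,
      Nonempty ((e' ≫ bX.p ≅ fbar₂ ≫ gbar) × (e' ≫ bX.p' ≅ gbar₂)) := by
    haveI := bX.ue Q₂
    set F := ((Bicategory.postcomposing Q₂ bX.P X).obj bX.p).prod'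
      ((Bicategory.postcomposing Q₂ bX.P X').obj bX.p') with hF
    refine ⟨F.objPreimage (fbar₂ ≫ gbar, gbar₂), ⟨⟨?_, ?_⟩⟩⟩
    · exact ⟨(F.objObjPreimageIso (fbar₂ ≫ gbar, gbar₂)).hom.1,
        (F.objObjPreimageIso (fbar₂ ≫ gbar, gbar₂)).inv.1,
        congrArg Prod.fst (F.objObjPreimageIso (fbar₂ ≫ gbar, gbar₂)).hom_inv_id,
        congrArg Prod.fst (F.objObjPreimageIso (fbar₂ ≫ gbar, gbar₂)).inv_hom_id⟩
    · exact ⟨(F.objObjPreimageIso (fbar₂ ≫ gbar, gbar₂)).hom.2,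
        (F.objObjPreimageIso (fbar₂ ≫ gbar, gbar₂)).inv.2,
        congrArg Prod.snd (F.objObjPreimageIso (fbar₂ ≫ gbar, gbar₂)).hom_inv_id,
        congrArg Prod.snd (F.objObjPreimageIso (fbar₂ ≫ gbar, gbar₂)).inv_hom_id⟩
  -- the comparison iso ι : e' ≫ m ≅ fbar₂ ≫ fbar from the biproduct bY at Q₂
  obtain ⟨ι, hι₁, hι₂⟩ : ∃ ι : e' ≫ m ≅ fbar₂ ≫ fbar,
      ι.hom ▷ bY.p = (α_ e' m bY.p).hom ≫ (e' ◁ i₁.hom) ≫ (α_ e' bX.p f).inv ≫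
        (j.hom ▷ f) ≫ (α_ fbar₂ gbar f).hom ≫ (fbar₂ ◁ φ.hom) ≫
        (α_ fbar₂ fbar bY.p).inv ∧
      ι.hom ▷ bY.p' = (α_ e' m bY.p').hom ≫ (e' ◁ i₂.hom) ≫ (α_ e' bX.p' f').inv ≫
        (j'.hom ▷ f') ≫ φ₂.hom ≫ (α_ fbar₂ fbar bY.p').inv := by
    haveI := bY.ue Q₂
    set F := ((Bicategory.postcomposing Q₂ bY.P Y).obj bY.p).prod'
      ((Bicategory.postcomposing Q₂ bY.P Y').obj bY.p') with hF
    set c₁ : (e' ≫ m) ≫ bY.p ≅ (fbar₂ ≫ fbar) ≫ bY.p :=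
      α_ e' m bY.p ≪≫ whiskerLeftIso e' i₁ ≪≫ (α_ e' bX.p f).symm ≪≫
        whiskerRightIso j f ≪≫ α_ fbar₂ gbar f ≪≫ whiskerLeftIso fbar₂ φ ≪≫
        (α_ fbar₂ fbar bY.p).symm with hc₁
    set c₂ : (e' ≫ m) ≫ bY.p' ≅ (fbar₂ ≫ fbar) ≫ bY.p' :=
      α_ e' m bY.p' ≪≫ whiskerLeftIso e' i₂ ≪≫ (α_ e' bX.p' f').symm ≪≫
        whiskerRightIso j' f' ≪≫ φ₂ ≪≫ (α_ fbar₂ fbar bY.p').symm with hc₂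
    refine ⟨F.preimageIso (show F.obj (e' ≫ m) ≅ F.obj (fbar₂ ≫ fbar) from
      c₁.prod c₂), ?_, ?_⟩
    · have h := congrArg Prod.fst (F.map_preimage
        (show F.obj (e' ≫ m) ⟶ F.obj (fbar₂ ≫ fbar) from (c₁.prod c₂).hom))
      exact h
    · have h := congrArg Prod.snd (F.map_preimage
        (show F.obj (e' ≫ m) ⟶ F.obj (fbar₂ ≫ fbar) from (c₁.prod c₂).hom))
      exact h
  -- κ : e' ≫ n ≅ fbar₂ via the bipullback Q
  obtain ⟨κ, hκ₁, hκ₂⟩ := HQ.iso_of_proj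
    (α_ e' n gbar ≪≫ whiskerLeftIso e' ian ≪≫ j)
    (α_ e' n fbar ≪≫ whiskerLeftIso e' ibn ≪≫ ι)
    (by
      simp only [Iso.trans_hom, whiskerLeftIso_hom, comp_whiskerRight,
        whisker_assoc, comp_whiskerLeft, Category.assoc]
      rw [En4, hι₁]
      simp only [Bicategory.whiskerLeft_comp, comp_whiskerRight, whisker_assoc,
        Category.assoc]
      bicategory)
  simp only [Iso.trans_hom, whiskerLeftIso_hom] at hκ₁ hκ₂
  -- 𝟙 bX.P ≅ e ≫ e'
  have hee' : Nonempty (𝟙 bX.P ≅ e ≫ e') := by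
    haveI := bX.ue bX.P
    set F := ((Bicategory.postcomposing bX.P bX.P X).obj bX.p).prod'
      ((Bicategory.postcomposing bX.P bX.P X').obj bX.p') with hF
    exact ⟨F.preimageIso (show F.obj (𝟙 bX.P) ≅ F.obj (e ≫ e') from
      Iso.prod
        (λ_ bX.p ≪≫ ian.symm ≪≫ whiskerRightIso ibe.symm gbar ≪≫
          α_ e fbar₂ gbar ≪≫ (whiskerLeftIso e j).symm ≪≫ (α_ e e' bX.p).symm)
        (λ_ bX.p' ≪≫ iae.symm ≪≫ (whiskerLeftIso e j').symm ≪≫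
          (α_ e e' bX.p').symm))⟩
  -- e' ≫ e ≅ 𝟙 Q₂ via the bipullback Q₂
  obtain ⟨γ, -, -⟩ := HQ₂.iso_of_proj
    (α_ e' e gbar₂ ≪≫ whiskerLeftIso e' iae ≪≫ j' ≪≫ (λ_ gbar₂).symm)
    (α_ e' e fbar₂ ≪≫ whiskerLeftIso e' ibe ≪≫ κ ≪≫ (λ_ fbar₂).symm)
    (by
      simp only [Iso.trans_hom, Iso.symm_hom, whiskerLeftIso_hom, comp_whiskerRight,
        whisker_assoc, Bicategory.whiskerRight_comp, comp_whiskerLeft, Category.assoc]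
      rw [Ee4, hκ₂]
      simp only [Bicategory.whiskerLeft_comp, comp_whiskerRight, whisker_assoc,
        Bicategory.whiskerRight_comp, Category.assoc]
      rw [hι₂]
      simp only [Bicategory.whiskerLeft_comp, comp_whiskerRight, whisker_assoc,
        Bicategory.whiskerRight_comp, Category.assoc]
      bicategory)
  have he : IsEquiv1Cell e := ⟨e', hee', ⟨γ⟩⟩
  exact hR.iso_closed _ m
    ((α_ e fbar₂ fbar).symm ≪≫ whiskerRightIso ibe fbar ≪≫ ibn)
    (hR.comp_mem _ _ (hR.equiv_mem e he) (hR.comp_mem _ _ hfbar₂ hfbar))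
end

section
/- Let E be a lextensive category with protocalibration R closed under finite coproducts. Given spans (u : S → U, v : S → W) and (r : T → V, s : T → W) with u, r ∈ R, the span (u + r : S + T → U + V, [v,s] : S + T → W) composed with the spans i_* and j_* induced by the coproduct injections i : U → U+V and j : V → U+V recovers the given spans up to isomorphism; consequently U −i_*→ U+V ←j_*− V is a bicoproduct in the span bicategory Spn_R E. -/
open CategoryTheory Limits

universe v u

variable {E : Type u} [Category.{v} E]

/-- A span from `X` to `Y` with left leg in the class `R`:
a 1-morphism of the bicategory `Spn_R E`. -/
structure RSpan (R : MorphismProperty E) (X Y : E) : Type (max u v) where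
  mid : E
  left : mid ⟶ X
  right : mid ⟶ Y
  memR : R left

/-- A morphism of `R`-spans (a 2-morphism of `Spn_R E`; for a category `E` the
isomorphism classes of span morphisms are just span morphisms). -/
@[ext]
structure RSpanHom {R : MorphismProperty E} {X Y : E} (f g : RSpan R X Y) : Type v where
  hom : f.mid ⟶ g.mid
  wl : hom ≫ g.left = f.left := by aesop_cat
  wr : hom ≫ g.right = f.right := by aesop_cat

attribute [simp] RSpanHom.wl RSpanHom.wr

/-- The hom-category `Spn_R E (X, Y)`. -/
instance {R : MorphismProperty E} {X Y : E} : Category (RSpan R X Y) where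
  Hom := RSpanHom
  id f := ⟨𝟙 f.mid, by simp, by simp⟩
  comp a b := ⟨a.hom ≫ b.hom, by rw [Category.assoc, b.wl, a.wl],
    by rw [Category.assoc, b.wr, a.wr]⟩
  id_comp a := by apply RSpanHom.ext; simp [CategoryStruct.comp, CategoryStruct.id]
  comp_id a := by apply RSpanHom.ext; simp [CategoryStruct.comp, CategoryStruct.id]
  assoc a b c := by apply RSpanHom.ext; simp [CategoryStruct.comp]

variable [HasPullbacks E]

/-- Precomposition in `Spn_R E` with the span `i_*` associated to `i : A ⟶ B`
(composition of spans is by pullback; `R`-ness of the left leg of the composite uses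
pullback-stability of `R`). -/
@[simps]
noncomputable def precompSpan (R : MorphismProperty E)
    (rpb : ∀ {A B C : E} (i : A ⟶ B) (u : C ⟶ B), R u → R (pullback.fst i u))
    {A B : E} (i : A ⟶ B) (W : E) : RSpan R B W ⥤ RSpan R A W where
  obj h := ⟨pullback i h.left, pullback.fst i h.left,
    pullback.snd i h.left ≫ h.right, rpb i h.left h.memR⟩
  map {h h'} a :=
    { hom := pullback.map i h.left i h'.left (𝟙 A) a.hom (𝟙 B) (by simp)
        (by simp [a.wl])
      wl := by
        show pullback.lift _ _ _ ≫ pullback.fst i h'.left = _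
        rw [pullback.lift_fst, Category.comp_id]
      wr := by
        rw [← Category.assoc, pullback.lift_snd]
        rw [Category.assoc, a.wr]
      }
  map_id h := by
    apply RSpanHom.ext
    apply pullback.hom_ext <;> simp [CategoryStruct.id]
  map_comp a b := by
    apply RSpanHom.ext
    apply pullback.hom_ext <;> simp only [CategoryStruct.comp, pullback.map, Category.assoc] <;>
      (repeat (first | erw [pullback.lift_fst] | erw [pullback.lift_snd] | erw [pullback.lift_fst_assoc] | erw [pullback.lift_snd_assoc])) <;> simp


@[simp] lemma RSpan.comp_hom {R : MorphismProperty E} {X Y : E} {f g h : RSpan R X Y}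
    (a : f ⟶ g) (b : g ⟶ h) : (a ≫ b).hom = a.hom ≫ b.hom := rfl

@[simp] lemma RSpan.id_hom {R : MorphismProperty E} {X Y : E} (f : RSpan R X Y) :
    (𝟙 f : f ⟶ f).hom = 𝟙 f.mid := rfl

/-- Build an isomorphism of `R`-spans from an isomorphism of midpoints. -/
@[simps]
def RSpan.mkIso {R : MorphismProperty E} {X Y : E} {f g : RSpan R X Y}
    (e : f.mid ≅ g.mid) (hl : e.hom ≫ g.left = f.left) (hr : e.hom ≫ g.right = f.right) :
    f ≅ g where
  hom := ⟨e.hom, hl, hr⟩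
  inv := ⟨e.inv, by rw [Iso.inv_comp_eq]; exact hl.symm,
    by rw [Iso.inv_comp_eq]; exact hr.symm⟩
  hom_inv_id := by apply RSpanHom.ext; simp
  inv_hom_id := by apply RSpanHom.ext; simp

/-- The coproduct-of-spans functor, inverse to the pairing of precompositions. -/
@[simps]
noncomputable def coprodSpan (R : MorphismProperty E) [HasBinaryCoproducts E]
    (rmap : ∀ {X Y X' Y' : E} (f : X ⟶ X') (g : Y ⟶ Y'), R f → R g → R (coprod.map f g))
    (U V W : E) : RSpan R U W × RSpan R V W ⥤ RSpan R (U ⨿ V) W where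
  obj p := ⟨p.1.mid ⨿ p.2.mid, coprod.map p.1.left p.2.left,
    coprod.desc p.1.right p.2.right, rmap _ _ p.1.memR p.2.memR⟩
  map {p q} a := ⟨coprod.map a.1.hom a.2.hom,
    by ext <;> simp [coprod.inl_map_assoc, coprod.inr_map_assoc],
    by ext <;> simp⟩
  map_id p := by apply RSpanHom.ext; simp [CategoryStruct.id]
  map_comp a b := by apply RSpanHom.ext; simp [CategoryStruct.comp]

/-- Let `E` be lextensive and `R` a protocalibration closed under finite coproducts.
Given `R`-spans `(u : S ⟶ U, v : S ⟶ W)` and `(r : T ⟶ V, s : T ⟶ W)`, the span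
`(u + r : S ⨿ T ⟶ U ⨿ V, [v,s] : S ⨿ T ⟶ W)` composed with the spans `i_*`, `j_*` of
the coproduct injections recovers the given spans up to isomorphism; consequently
`U ⟶ U ⨿ V ⟵ V` is a bicoproduct in `Spn_R E`: for every `W` the precomposition
functor `Spn_R E (U ⨿ V, W) ⥤ Spn_R E (U, W) × Spn_R E (V, W)` is an equivalence. -/
theorem coprod_is_bicoproduct_in_RSpan
    [HasFiniteLimits E] [HasFiniteCoproducts E] [FinitaryExtensive E]
    (R : MorphismProperty E)
    (riso : ∀ {X Y : E} (f : X ⟶ Y), IsIso f → R f)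
    (rcomp : ∀ {X Y Z : E} (f : X ⟶ Y) (g : Y ⟶ Z), R f → R g → R (f ≫ g))
    (rpb : ∀ {A B C : E} (i : A ⟶ B) (u : C ⟶ B), R u → R (pullback.fst i u))
    (rinit : ∀ X : E, R (initial.to X))
    (rinl : ∀ X Y : E, R (coprod.inl : X ⟶ X ⨿ Y))
    (rinr : ∀ X Y : E, R (coprod.inr : Y ⟶ X ⨿ Y))
    (rdesc : ∀ {X Y Z : E} (f : X ⟶ Z) (g : Y ⟶ Z), R f → R g → R (coprod.desc f g))
    (rmap : ∀ {X Y X' Y' : E} (f : X ⟶ X') (g : Y ⟶ Y'), R f → R g → R (coprod.map f g))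
    (U V W : E) :
    (∀ {S T : E} (u : S ⟶ U) (v : S ⟶ W) (r : T ⟶ V) (s : T ⟶ W)
      (hu : R u) (hr : R r),
      Nonempty ((precompSpan R rpb (coprod.inl : U ⟶ U ⨿ V) W).obj
          ⟨S ⨿ T, coprod.map u r, coprod.desc v s, rmap u r hu hr⟩
        ≅ (⟨S, u, v, hu⟩ : RSpan R U W)) ∧
      Nonempty ((precompSpan R rpb (coprod.inr : V ⟶ U ⨿ V) W).obj
          ⟨S ⨿ T, coprod.map u r, coprod.desc v s, rmap u r hu hr⟩
        ≅ (⟨T, r, s, hr⟩ : RSpan R V W))) ∧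
    ((precompSpan R rpb (coprod.inl : U ⟶ U ⨿ V) W).prod'
      (precompSpan R rpb (coprod.inr : V ⟶ U ⨿ V) W)).IsEquivalence := by
  -- van Kampen property of the coproduct cocone on `U`, `V`
  have vk := FinitaryExtensive.vanKampen _ (coprodIsCoprod U V)
  rw [BinaryCofan.isVanKampen_iff] at vk
  -- Fact A: the two squares expressing `S`, `T` as pullbacks of `u + r` along the injections
  have factA : ∀ {S T : E} (u : S ⟶ U) (r : T ⟶ V),
      IsPullback (coprod.inl : S ⟶ S ⨿ T) u (coprod.map u r) coprod.inl ∧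
      IsPullback (coprod.inr : T ⟶ S ⨿ T) r (coprod.map u r) coprod.inr := by
    intro S T u r
    exact (vk (BinaryCofan.mk coprod.inl coprod.inr) u r (coprod.map u r)
      (coprod.inl_map u r).symm (coprod.inr_map u r).symm).mp ⟨coprodIsCoprod S T⟩
  -- Fact B: every object over `U ⨿ V` decomposes as the coproduct of the two pullbacks
  have factB : ∀ {M : E} (h : M ⟶ U ⨿ V),
      IsColimit (BinaryCofan.mk (pullback.snd (coprod.inl : U ⟶ U ⨿ V) h)
        (pullback.snd (coprod.inr : V ⟶ U ⨿ V) h)) := by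
    intro M h
    exact ((vk (BinaryCofan.mk (pullback.snd coprod.inl h) (pullback.snd coprod.inr h))
      (pullback.fst coprod.inl h) (pullback.fst coprod.inr h) h
      pullback.condition pullback.condition).mpr
      ⟨(IsPullback.of_hasPullback coprod.inl h).flip,
       (IsPullback.of_hasPullback coprod.inr h).flip⟩).some
  -- the component isomorphisms of the counit
  letI counitL : ∀ (p : RSpan R U W × RSpan R V W),
      (precompSpan R rpb (coprod.inl : U ⟶ U ⨿ V) W).obj
        ((coprodSpan R rmap U V W).obj p) ≅ p.1 := by
    intro p
    refine RSpan.mkIso ((factA p.1.left p.2.left).1.flip.isoPullback).symm ?_ ?_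
    · exact (factA p.1.left p.2.left).1.flip.isoPullback_inv_fst
    · show ((factA p.1.left p.2.left).1.flip.isoPullback).inv ≫ p.1.right =
        pullback.snd coprod.inl (coprod.map p.1.left p.2.left) ≫ coprod.desc p.1.right p.2.right
      rw [Iso.inv_comp_eq, IsPullback.isoPullback_hom_snd_assoc, coprod.inl_desc]
  letI counitR : ∀ (p : RSpan R U W × RSpan R V W),
      (precompSpan R rpb (coprod.inr : V ⟶ U ⨿ V) W).obj
        ((coprodSpan R rmap U V W).obj p) ≅ p.2 := by
    intro p
    refine RSpan.mkIso ((factA p.1.left p.2.left).2.flip.isoPullback).symm ?_ ?_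
    · exact (factA p.1.left p.2.left).2.flip.isoPullback_inv_fst
    · show ((factA p.1.left p.2.left).2.flip.isoPullback).inv ≫ p.2.right =
        pullback.snd coprod.inr (coprod.map p.1.left p.2.left) ≫ coprod.desc p.1.right p.2.right
      rw [Iso.inv_comp_eq, IsPullback.isoPullback_hom_snd_assoc, coprod.inr_desc]
  refine ⟨fun {S T} u v r s hu hr => ⟨⟨counitL (⟨S, u, v, hu⟩, ⟨T, r, s, hr⟩)⟩,
    ⟨counitR (⟨S, u, v, hu⟩, ⟨T, r, s, hr⟩)⟩⟩, ?_⟩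
  -- the unit isomorphism
  letI F := (precompSpan R rpb (coprod.inl : U ⟶ U ⨿ V) W).prod'
    (precompSpan R rpb (coprod.inr : V ⟶ U ⨿ V) W)
  letI G := coprodSpan R rmap U V W
  -- decomposition iso for each span over `U ⨿ V`
  have dfacl : ∀ (h : RSpan R (U ⨿ V) W),
      pullback.snd (coprod.inl : U ⟶ U ⨿ V) h.left ≫
        (factB h.left).desc (BinaryCofan.mk coprod.inl coprod.inr) = coprod.inl := fun h => by
    exact (factB h.left).fac (BinaryCofan.mk coprod.inl coprod.inr) ⟨WalkingPair.left⟩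
  have dfacr : ∀ (h : RSpan R (U ⨿ V) W),
      pullback.snd (coprod.inr : V ⟶ U ⨿ V) h.left ≫
        (factB h.left).desc (BinaryCofan.mk coprod.inl coprod.inr) = coprod.inr := fun h => by
    exact (factB h.left).fac (BinaryCofan.mk coprod.inl coprod.inr) ⟨WalkingPair.right⟩
  letI dec : ∀ (h : RSpan R (U ⨿ V) W),
      h.mid ≅ pullback (coprod.inl : U ⟶ U ⨿ V) h.left ⨿
        pullback (coprod.inr : V ⟶ U ⨿ V) h.left := fun h =>
    { hom := (factB h.left).desc (BinaryCofan.mk coprod.inl coprod.inr)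
      inv := coprod.desc (pullback.snd coprod.inl h.left) (pullback.snd coprod.inr h.left)
      hom_inv_id := by
        apply (factB h.left).hom_ext
        rintro ⟨⟨⟩⟩
        · show pullback.snd coprod.inl h.left ≫ (factB h.left).desc (BinaryCofan.mk coprod.inl coprod.inr) ≫
            coprod.desc (pullback.snd coprod.inl h.left) (pullback.snd coprod.inr h.left) =
            pullback.snd coprod.inl h.left ≫ 𝟙 h.mid
          refine (Category.assoc _ _ _).symm.trans ?_
          refine (congrArg (· ≫ _) (dfacl h)).trans ?_
          exact (coprod.inl_desc _ _).trans (Category.comp_id _).symm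
        · show pullback.snd coprod.inr h.left ≫ (factB h.left).desc (BinaryCofan.mk coprod.inl coprod.inr) ≫
            coprod.desc (pullback.snd coprod.inl h.left) (pullback.snd coprod.inr h.left) =
            pullback.snd coprod.inr h.left ≫ 𝟙 h.mid
          refine (Category.assoc _ _ _).symm.trans ?_
          refine (congrArg (· ≫ _) (dfacr h)).trans ?_
          exact (coprod.inr_desc _ _).trans (Category.comp_id _).symm
      inv_hom_id := by
        apply coprod.hom_ext
        · erw [coprod.inl_desc_assoc, dfacl h, Category.comp_id]
        · erw [coprod.inr_desc_assoc, dfacr h, Category.comp_id] }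
  have dec_inv_l : ∀ (h : RSpan R (U ⨿ V) W),
      coprod.inl ≫ (dec h).inv = pullback.snd coprod.inl h.left := fun h =>
    coprod.inl_desc _ _
  have dec_inv_r : ∀ (h : RSpan R (U ⨿ V) W),
      coprod.inr ≫ (dec h).inv = pullback.snd coprod.inr h.left := fun h =>
    coprod.inr_desc _ _
  have dec_hom_l : ∀ (h : RSpan R (U ⨿ V) W),
      pullback.snd (coprod.inl : U ⟶ U ⨿ V) h.left ≫ (dec h).hom = coprod.inl := dfacl
  have dec_hom_r : ∀ (h : RSpan R (U ⨿ V) W),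
      pullback.snd (coprod.inr : V ⟶ U ⨿ V) h.left ≫ (dec h).hom = coprod.inr := dfacr
  letI unit : ∀ (h : RSpan R (U ⨿ V) W), h ≅ G.obj (F.obj h) := by
    intro h
    refine RSpan.mkIso (f := h) (g := G.obj (F.obj h)) (dec h) ?_ ?_
    · erw [← Iso.eq_inv_comp]
      apply coprod.hom_ext
      all_goals dsimp only [G, F, coprodSpan_obj_left, Functor.prod'_obj,
        precompSpan_obj_mid, precompSpan_obj_left]
      · show coprod.inl ≫ coprod.map (pullback.fst coprod.inl h.left) (pullback.fst coprod.inr h.left) =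
          coprod.inl ≫ (dec h).inv ≫ h.left
        rw [coprod.inl_map, reassoc_of% (dec_inv_l h), ← pullback.condition]
      · show coprod.inr ≫ coprod.map (pullback.fst coprod.inl h.left) (pullback.fst coprod.inr h.left) =
          coprod.inr ≫ (dec h).inv ≫ h.left
        rw [coprod.inr_map, reassoc_of% (dec_inv_r h), ← pullback.condition]
    · erw [← Iso.eq_inv_comp]
      apply coprod.hom_ext
      all_goals dsimp only [G, F, coprodSpan_obj_right, Functor.prod'_obj,
        precompSpan_obj_mid, precompSpan_obj_right]
      · show coprod.inl ≫ coprod.desc (pullback.snd coprod.inl h.left ≫ h.right)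
          (pullback.snd coprod.inr h.left ≫ h.right) = coprod.inl ≫ (dec h).inv ≫ h.right
        rw [coprod.inl_desc, reassoc_of% (dec_inv_l h)]
      · show coprod.inr ≫ coprod.desc (pullback.snd coprod.inl h.left ≫ h.right)
          (pullback.snd coprod.inr h.left ≫ h.right) = coprod.inr ≫ (dec h).inv ≫ h.right
        rw [coprod.inr_desc, reassoc_of% (dec_inv_r h)]
  have unitNat : ∀ {h h' : RSpan R (U ⨿ V) W} (a : h ⟶ h'),
      (𝟭 _).map a ≫ (unit h').hom = (unit h).hom ≫ (F ⋙ G).map a := by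
    intro h h' a
    apply RSpanHom.ext
    simp only [RSpan.comp_hom, Functor.id_map]
    dsimp only [unit, Functor.comp_map, G, F, Functor.prod'_map, coprodSpan_map_hom,
      precompSpan_map_hom, RSpan.mkIso_hom_hom]
    apply (factB h.left).hom_ext
    rintro ⟨⟨⟩⟩
    · simp only [BinaryCofan.mk_pt, BinaryCofan.ι_app_left, BinaryCofan.mk_inl]
      show pullback.snd coprod.inl h.left ≫ a.hom ≫ (dec h').hom = pullback.snd coprod.inl h.left ≫
        (dec h).hom ≫ coprod.map
          (pullback.map coprod.inl h.left coprod.inl h'.left (𝟙 U) a.hom (𝟙 (U ⨿ V)) (by simp)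
            (by simp [a.wl]))
          (pullback.map coprod.inr h.left coprod.inr h'.left (𝟙 V) a.hom (𝟙 (U ⨿ V)) (by simp)
            (by simp [a.wl]))
      rw [reassoc_of% (dec_hom_l h), coprod.inl_map]
      conv_lhs => rw [← Category.assoc,
        ← pullback.lift_snd (f := coprod.inl) (g := h'.left) (pullback.fst coprod.inl h.left ≫ 𝟙 U)
          (pullback.snd coprod.inl h.left ≫ a.hom) (by simp [pullback.condition])]
      rw [Category.assoc, dec_hom_l h']
    · simp only [BinaryCofan.mk_pt, BinaryCofan.ι_app_right, BinaryCofan.mk_inr]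
      show pullback.snd coprod.inr h.left ≫ a.hom ≫ (dec h').hom = pullback.snd coprod.inr h.left ≫
        (dec h).hom ≫ coprod.map
          (pullback.map coprod.inl h.left coprod.inl h'.left (𝟙 U) a.hom (𝟙 (U ⨿ V)) (by simp)
            (by simp [a.wl]))
          (pullback.map coprod.inr h.left coprod.inr h'.left (𝟙 V) a.hom (𝟙 (U ⨿ V)) (by simp)
            (by simp [a.wl]))
      rw [reassoc_of% (dec_hom_r h), coprod.inr_map]
      conv_lhs => rw [← Category.assoc,
        ← pullback.lift_snd (f := coprod.inr) (g := h'.left) (pullback.fst coprod.inr h.left ≫ 𝟙 V)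
          (pullback.snd coprod.inr h.left ≫ a.hom) (by simp [pullback.condition])]
      rw [Category.assoc, dec_hom_r h']
  have counitNatL : ∀ {p q : RSpan R U W × RSpan R V W} (a : p ⟶ q),
      ((G ⋙ precompSpan R rpb (coprod.inl : U ⟶ U ⨿ V) W).map a) ≫ (counitL q).hom =
        (counitL p).hom ≫ a.1 := by
    intro p q a
    apply RSpanHom.ext
    simp only [RSpan.comp_hom, RSpan.mkIso_hom_hom, Iso.symm_hom]
    dsimp only [counitL, Functor.comp_map, G, coprodSpan_map_hom, precompSpan_map_hom,
      coprodSpan_obj_mid, coprodSpan_obj_left, coprodSpan_obj_right,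
      precompSpan_obj_mid, precompSpan_obj_left, precompSpan_obj_right,
      RSpan.mkIso_hom_hom, Iso.symm_hom]
    refine (cancel_epi ((factA p.1.left p.2.left).1.flip.isoPullback).hom).mp ((cancel_mono
      ((factA q.1.left q.2.left).1.flip.isoPullback).hom).mp ?_)
    show (((factA p.1.left p.2.left).1.flip.isoPullback).hom ≫
        pullback.map coprod.inl (coprod.map p.1.left p.2.left) coprod.inl (coprod.map q.1.left q.2.left)
          (𝟙 U) (coprod.map a.1.hom a.2.hom) (𝟙 (U ⨿ V)) (by simp) (by ext <;> simp) ≫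
        ((factA q.1.left q.2.left).1.flip.isoPullback).inv) ≫
        ((factA q.1.left q.2.left).1.flip.isoPullback).hom =
      (((factA p.1.left p.2.left).1.flip.isoPullback).hom ≫
        ((factA p.1.left p.2.left).1.flip.isoPullback).inv ≫ a.1.hom) ≫
        ((factA q.1.left q.2.left).1.flip.isoPullback).hom
    simp only [Category.assoc, Iso.inv_hom_id, Category.comp_id, Iso.hom_inv_id_assoc]
    apply pullback.hom_ext
    · simp [a.1.wl, pullback.map]
      erw [pullback.lift_fst]
      exact (factA p.1.left p.2.left).1.flip.isoPullback_hom_fst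
    · simp only [Category.assoc, IsPullback.isoPullback_hom_snd]
      rw [pullback.lift_snd, IsPullback.isoPullback_hom_snd_assoc]
      simp
  have counitNatR : ∀ {p q : RSpan R U W × RSpan R V W} (a : p ⟶ q),
      ((G ⋙ precompSpan R rpb (coprod.inr : V ⟶ U ⨿ V) W).map a) ≫ (counitR q).hom =
        (counitR p).hom ≫ a.2 := by
    intro p q a
    apply RSpanHom.ext
    simp only [RSpan.comp_hom, RSpan.mkIso_hom_hom, Iso.symm_hom]
    dsimp only [counitR, Functor.comp_map, G, coprodSpan_map_hom, precompSpan_map_hom,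
      coprodSpan_obj_mid, coprodSpan_obj_left, coprodSpan_obj_right,
      precompSpan_obj_mid, precompSpan_obj_left, precompSpan_obj_right,
      RSpan.mkIso_hom_hom, Iso.symm_hom]
    refine (cancel_epi ((factA p.1.left p.2.left).2.flip.isoPullback).hom).mp ((cancel_mono
      ((factA q.1.left q.2.left).2.flip.isoPullback).hom).mp ?_)
    show (((factA p.1.left p.2.left).2.flip.isoPullback).hom ≫
        pullback.map coprod.inr (coprod.map p.1.left p.2.left) coprod.inr (coprod.map q.1.left q.2.left)
          (𝟙 V) (coprod.map a.1.hom a.2.hom) (𝟙 (U ⨿ V)) (by simp) (by ext <;> simp) ≫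
        ((factA q.1.left q.2.left).2.flip.isoPullback).inv) ≫
        ((factA q.1.left q.2.left).2.flip.isoPullback).hom =
      (((factA p.1.left p.2.left).2.flip.isoPullback).hom ≫
        ((factA p.1.left p.2.left).2.flip.isoPullback).inv ≫ a.2.hom) ≫
        ((factA q.1.left q.2.left).2.flip.isoPullback).hom
    simp only [Category.assoc, Iso.inv_hom_id, Category.comp_id, Iso.hom_inv_id_assoc]
    apply pullback.hom_ext
    · simp [a.2.wl, pullback.map]
      erw [pullback.lift_fst]
      exact (factA p.1.left p.2.left).2.flip.isoPullback_hom_fst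
    · simp only [Category.assoc, IsPullback.isoPullback_hom_snd]
      rw [pullback.lift_snd, IsPullback.isoPullback_hom_snd_assoc]
      simp
  exact (CategoryTheory.Equivalence.mk F G
    (NatIso.ofComponents unit (fun a => unitNat a))
    (NatIso.ofComponents (fun p => Iso.prod (counitL p) (counitR p))
      (fun {p q} a => Prod.ext (counitNatL a) (counitNatR a)))).isEquivalence_functor
end
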